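/- Let B ∈ M_r(ℂ[[t]]) be a matrix of formal power series with det B = 1 and satisfying ρ(B)ᵀ = B (i.e. B(t)ᵀ = B(−t), equivalently B(t) = B(−t)ᵀ). Then there exists C ∈ M_r(ℂ[[t]]) with det C = 1 such that B = ρ(C)ᵀ·C, i.e. B(t) = C(−t)ᵀ·C(t). -/

import Mathlib

open Matrix
open Matrix Finset

lemma quad_eq_poly {r : ℕ} (M N : Matrix (Fin r) (Fin r) ℂ) (hM : Mᵀ = M) (hN : Nᵀ = N)
    (h : ∀ x : Fin r → ℂ, x ⬝ᵥ M *ᵥ x = x ⬝ᵥ N *ᵥ x) : M = N := by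
  ext i j
  have key : ∀ P : Matrix (Fin r) (Fin r) ℂ, ∀ x y : Fin r → ℂ,
      (x + y) ⬝ᵥ P *ᵥ (x + y) = x ⬝ᵥ P *ᵥ x + y ⬝ᵥ P *ᵥ y + (x ⬝ᵥ P *ᵥ y + y ⬝ᵥ P *ᵥ x) := by
    intro P x y
    simp only [Matrix.mulVec_add, add_dotProduct, dotProduct_add]
    ring
  have h2 : (Pi.single i 1 : Fin r → ℂ) ⬝ᵥ M *ᵥ (Pi.single j 1) +
      (Pi.single j 1 : Fin r → ℂ) ⬝ᵥ M *ᵥ (Pi.single i 1) =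
      (Pi.single i 1 : Fin r → ℂ) ⬝ᵥ N *ᵥ (Pi.single j 1) +
      (Pi.single j 1 : Fin r → ℂ) ⬝ᵥ N *ᵥ (Pi.single i 1) := by
    have e1 := key M (Pi.single i 1) (Pi.single j 1)
    have e2 := key N (Pi.single i 1) (Pi.single j 1)
    rw [h, h, h] at e1
    rw [e2] at e1
    exact (add_left_cancel e1).symm
  have single : ∀ (P : Matrix (Fin r) (Fin r) ℂ) (a b : Fin r),
      (Pi.single a 1 : Fin r → ℂ) ⬝ᵥ P *ᵥ (Pi.single b 1) = P a b := by
    intro P a b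
    simp [dotProduct, Matrix.mulVec, Pi.single_apply]
  rw [single, single, single, single] at h2
  have hMs : M j i = M i j := (Matrix.transpose_apply M i j).symm.trans (congrFun (congrFun hM i) j)
  have hNs : N j i = N i j := (Matrix.transpose_apply N i j).symm.trans (congrFun (congrFun hN i) j)
  rw [hMs, hNs] at h2
  have h3 : (2:ℂ) * M i j = 2 * N i j := by rw [two_mul, two_mul]; exact h2
  exact mul_left_cancel₀ (two_ne_zero' ℂ) h3

lemma sym_factor {r : ℕ} (M : Matrix (Fin r) (Fin r) ℂ) (hsym : Mᵀ = M) (hdet : M.det ≠ 0) :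
    ∃ A : Matrix (Fin r) (Fin r) ℂ, Aᵀ * A = M ∧ IsUnit A.det := by
  classical
  have hBsym : (Matrix.toLinearMap₂' ℂ M).IsSymm := by
    constructor; intro x y
    simp only [RingHom.id_apply, Matrix.toLinearMap₂'_apply]
    rw [Finset.sum_comm]
    refine Finset.sum_congr rfl fun a _ => Finset.sum_congr rfl fun b _ => ?_
    have : M b a = M a b := (Matrix.transpose_apply M a b).symm.trans (congrFun (congrFun hsym a) b)
    rw [this]
    simp only [smul_eq_mul]; ring
  have hsep : (QuadraticMap.associated (R := ℂ) M.toQuadraticMap').SeparatingLeft := by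
    rw [Matrix.toQuadraticMap', Matrix.toQuadraticForm', QuadraticMap.associated_left_inverse ℂ hBsym.eq]
    exact LinearMap.separatingLeft_toLinearMap₂'_of_det_ne_zero' hdet
  obtain ⟨f⟩ := QuadraticForm.equivalent_sum_squares M.toQuadraticMap' hsep
  set d := Module.finrank ℂ (Fin r → ℂ) with hdd
  have hd : d = r := Module.finrank_fin_fun ℂ
  set A0 : Matrix (Fin d) (Fin r) ℂ := LinearMap.toMatrix' (f.toLinearEquiv : (Fin r → ℂ) →ₗ[ℂ] (Fin d → ℂ)) with hA0
  have hfx : ∀ x : Fin r → ℂ, f x = A0 *ᵥ x := by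
    intro x
    have := Matrix.toLin'_toMatrix' (f.toLinearEquiv : (Fin r → ℂ) →ₗ[ℂ] (Fin d → ℂ))
    calc f x = Matrix.toLin' A0 x := by rw [hA0, this]; rfl
    _ = A0 *ᵥ x := Matrix.toLin'_apply A0 x
  have key : ∀ x : Fin r → ℂ, x ⬝ᵥ (A0ᵀ * A0) *ᵥ x = x ⬝ᵥ M *ᵥ x := by
    intro x
    have h1 := f.map_app x
    rw [QuadraticMap.weightedSumSquares_apply] at h1
    have h2 : M.toQuadraticMap' x = x ⬝ᵥ M *ᵥ x := by
      rw [Matrix.toQuadraticMap', Matrix.toQuadraticForm', LinearMap.BilinMap.toQuadraticMap_apply,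
        Matrix.toLinearMap₂'_apply']
    rw [h2] at h1
    rw [← h1]
    rw [← Matrix.mulVec_mulVec, Matrix.dotProduct_mulVec, Matrix.vecMul_transpose]
    simp only [hfx, Pi.one_apply, one_smul, dotProduct]
  have hfact : A0ᵀ * A0 = M := by
    apply quad_eq_poly _ _ _ hsym key
    rw [Matrix.transpose_mul, Matrix.transpose_transpose]
  set A : Matrix (Fin r) (Fin r) ℂ := A0.submatrix (Fin.cast hd.symm) id with hA
  have hAA : Aᵀ * A = A0ᵀ * A0 := by
    ext i j
    simp only [Matrix.mul_apply, Matrix.transpose_apply, hA, Matrix.submatrix_apply, id_eq]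
    exact Fintype.sum_equiv (finCongr hd.symm) _ _ (fun k => rfl)
  refine ⟨A, hAA.trans hfact, ?_⟩
  have : A.det * A.det = M.det := by
    rw [← hfact, ← hAA, Matrix.det_mul, Matrix.det_transpose]
  rw [isUnit_iff_ne_zero]
  intro h0
  rw [h0, mul_zero] at this
  exact hdet this.symm
open Matrix Finset PowerSeries

noncomputable def sqcoef (k : ℕ) : ℂ := ((Ring.choose (2⁻¹ : ℚ) k : ℚ) : ℂ)

lemma sq_vandermonde (s : ℕ) :
    ∑ ij ∈ Finset.HasAntidiagonal.antidiagonal s, sqcoef ij.1 * sqcoef ij.2 = if s ≤ 1 then 1 else 0 := by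
  have h : Ring.choose ((2⁻¹ : ℚ) + 2⁻¹) s
      = ∑ ij ∈ Finset.HasAntidiagonal.antidiagonal s, Ring.choose (2⁻¹:ℚ) ij.1 * Ring.choose (2⁻¹:ℚ) ij.2 :=
    Ring.add_choose_eq s (Commute.all _ _)
  have h2 : ((2⁻¹ : ℚ) + 2⁻¹) = ((1:ℕ) : ℚ) := by norm_num
  rw [h2, Ring.choose_natCast] at h
  have h3 : (Nat.choose 1 s : ℚ) = if s ≤ 1 then 1 else 0 := by
    match s with
    | 0 => simp
    | 1 => simp
    | (n+2) => rw [Nat.choose_eq_zero_of_lt (by omega)]; simp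
  rw [h3] at h
  have hc : (∑ ij ∈ Finset.HasAntidiagonal.antidiagonal s, sqcoef ij.1 * sqcoef ij.2)
      = ((∑ ij ∈ Finset.HasAntidiagonal.antidiagonal s,
          Ring.choose (2⁻¹:ℚ) ij.1 * Ring.choose (2⁻¹:ℚ) ij.2 : ℚ) : ℂ) := by
    rw [Rat.cast_sum]
    exact Finset.sum_congr rfl fun ij _ => (Rat.cast_mul _ _).symm
  rw [hc, ← h]
  split_ifs <;> norm_num

variable {r : ℕ}

noncomputable def co (n : ℕ) (M : Matrix (Fin r) (Fin r) (PowerSeries ℂ)) :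
    Matrix (Fin r) (Fin r) ℂ := M.map (PowerSeries.coeff (R := ℂ) n)

lemma co_apply (n : ℕ) (M : Matrix (Fin r) (Fin r) (PowerSeries ℂ)) (i j : Fin r) :
    co n M i j = PowerSeries.coeff (R := ℂ) n (M i j) := rfl

lemma co_ext {M N : Matrix (Fin r) (Fin r) (PowerSeries ℂ)} (h : ∀ n, co n M = co n N) :
    M = N := by
  ext i j n
  exact congrFun (congrFun (h n) i) j

lemma co_add (n : ℕ) (M N : Matrix (Fin r) (Fin r) (PowerSeries ℂ)) :
    co n (M + N) = co n M + co n N := by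
  ext i j; simp [co]

lemma co_sub (n : ℕ) (M N : Matrix (Fin r) (Fin r) (PowerSeries ℂ)) :
    co n (M - N) = co n M - co n N := by
  ext i j; simp [co]

lemma co_one (n : ℕ) : co n (1 : Matrix (Fin r) (Fin r) (PowerSeries ℂ))
    = if n = 0 then 1 else 0 := by
  ext i j
  by_cases h : n = 0 <;> by_cases hij : i = j <;>
    simp [co, h, hij, Matrix.one_apply, PowerSeries.coeff_one]

lemma co_mul (n : ℕ) (M N : Matrix (Fin r) (Fin r) (PowerSeries ℂ)) :
    co n (M * N) = ∑ pq ∈ Finset.HasAntidiagonal.antidiagonal n, co pq.1 M * co pq.2 N := by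
  ext i j
  simp only [co, Matrix.map_apply, Matrix.mul_apply, map_sum, PowerSeries.coeff_mul,
    Finset.sum_apply, Matrix.sum_apply]
  rw [Finset.sum_comm]

lemma co_pow_zero {N : Matrix (Fin r) (Fin r) (PowerSeries ℂ)} (h : co 0 N = 0) :
    ∀ k n, n < k → co n (N ^ k) = 0 := by
  intro k
  induction k with
  | zero => intro n hn; omega
  | succ k ih =>
    intro n hn
    rw [pow_succ, co_mul]
    apply Finset.sum_eq_zero
    intro pq hpq
    have hmem := Finset.HasAntidiagonal.mem_antidiagonal.mp hpq
    rcases Nat.eq_zero_or_pos pq.2 with h2 | h2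
    · rw [h2, h, mul_zero]
    · have : pq.1 < k := by omega
      rw [ih pq.1 this, zero_mul]

noncomputable def sqrtm (N : Matrix (Fin r) (Fin r) (PowerSeries ℂ)) :
    Matrix (Fin r) (Fin r) (PowerSeries ℂ) :=
  Matrix.of fun i j => PowerSeries.mk fun n =>
    ∑ k ∈ Finset.range (n + 1), sqcoef k * PowerSeries.coeff (R := ℂ) n ((N ^ k) i j)

lemma co_sqrtm {N : Matrix (Fin r) (Fin r) (PowerSeries ℂ)} (h0 : co 0 N = 0)
    {n K : ℕ} (hn : n ≤ K) :
    co n (sqrtm N) = ∑ k ∈ Finset.range (K + 1), sqcoef k • co n (N ^ k) := by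
  ext i j
  simp only [co, sqrtm, Matrix.map_apply, Matrix.of_apply, PowerSeries.coeff_mk,
    Finset.sum_apply, Matrix.sum_apply, Matrix.smul_apply, smul_eq_mul]
  apply Finset.sum_subset
  · exact Finset.range_subset_range.mpr (by omega)
  · intro k _ hk
    have hk' : n < k := by simp at hk; omega
    have hz : PowerSeries.coeff (R := ℂ) n ((N ^ k) i j) = 0 := by
      have := congrFun (congrFun (co_pow_zero h0 k n hk') i) j
      simpa [co] using this
    rw [hz, mul_zero]

lemma sqrtm_mul_self {N : Matrix (Fin r) (Fin r) (PowerSeries ℂ)} (h0 : co 0 N = 0) :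
    sqrtm N * sqrtm N = 1 + N := by
  apply co_ext
  intro n
  rw [co_mul]
  have step1 : ∀ pq ∈ Finset.HasAntidiagonal.antidiagonal n, co pq.1 (sqrtm N) * co pq.2 (sqrtm N)
      = ∑ ij ∈ Finset.range (n+1) ×ˢ Finset.range (n+1),
          (sqcoef ij.1 * sqcoef ij.2) • (co pq.1 (N ^ ij.1) * co pq.2 (N ^ ij.2)) := by
    intro pq hpq
    have hmem := Finset.HasAntidiagonal.mem_antidiagonal.mp hpq
    rw [co_sqrtm h0 (show pq.1 ≤ n by omega), co_sqrtm h0 (show pq.2 ≤ n by omega),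
      Finset.sum_mul_sum]
    rw [Finset.sum_product]
    refine Finset.sum_congr rfl fun a _ => Finset.sum_congr rfl fun b _ => ?_
    rw [smul_mul_assoc, mul_smul_comm, smul_smul]
  rw [Finset.sum_congr rfl step1, Finset.sum_comm]
  have step2 : ∀ ij ∈ Finset.range (n+1) ×ˢ Finset.range (n+1),
      (∑ pq ∈ Finset.HasAntidiagonal.antidiagonal n,
        (sqcoef ij.1 * sqcoef ij.2) • (co pq.1 (N ^ ij.1) * co pq.2 (N ^ ij.2)))
      = (sqcoef ij.1 * sqcoef ij.2) • co n (N ^ (ij.1 + ij.2)) := by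
    intro ij _
    rw [← Finset.smul_sum, ← co_mul, ← pow_add]
  rw [Finset.sum_congr rfl step2]
  have hmap : ∀ ij ∈ Finset.range (n+1) ×ˢ Finset.range (n+1),
      ij.1 + ij.2 ∈ Finset.range (2*n+2) := by
    intro ij hij
    simp only [Finset.mem_product, Finset.mem_range] at hij ⊢
    omega
  rw [← Finset.sum_fiberwise_of_maps_to hmap
    (fun ij => (sqcoef ij.1 * sqcoef ij.2) • co n (N ^ (ij.1 + ij.2)))]
  have step3 : ∀ s ∈ Finset.range (2*n+2),
      (∑ ij ∈ (Finset.range (n+1) ×ˢ Finset.range (n+1)).filter (fun ij => ij.1 + ij.2 = s),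
        (sqcoef ij.1 * sqcoef ij.2) • co n (N ^ (ij.1 + ij.2)))
      = if s ≤ 1 then co n (N ^ s) else 0 := by
    intro s _
    have hsum : ∀ ij ∈ (Finset.range (n+1) ×ˢ Finset.range (n+1)).filter
        (fun ij => ij.1 + ij.2 = s),
        (sqcoef ij.1 * sqcoef ij.2) • co n (N ^ (ij.1 + ij.2))
        = (sqcoef ij.1 * sqcoef ij.2) • co n (N ^ s) := by
      intro ij hij
      rw [(Finset.mem_filter.mp hij).2]
    rw [Finset.sum_congr rfl hsum, ← Finset.sum_smul]
    by_cases hs : s ≤ n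
    · have hfil : (Finset.range (n+1) ×ˢ Finset.range (n+1)).filter
          (fun ij => ij.1 + ij.2 = s) = Finset.HasAntidiagonal.antidiagonal s := by
        ext ij
        simp only [Finset.mem_filter, Finset.mem_product, Finset.mem_range,
          Finset.HasAntidiagonal.mem_antidiagonal]
        omega
      rw [hfil, sq_vandermonde]
      by_cases h1 : s ≤ 1 <;> simp [h1]
    · have hz : co n (N ^ s) = 0 := co_pow_zero h0 s n (by omega)
      rw [hz, smul_zero]
      by_cases h1 : s ≤ 1 <;> simp [h1, hz]
  rw [Finset.sum_congr rfl step3, ← Finset.sum_filter]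
  have hfil2 : (Finset.range (2*n+2)).filter (fun s => s ≤ 1) = {0, 1} := by
    ext s
    simp only [Finset.mem_filter, Finset.mem_range, Finset.mem_insert, Finset.mem_singleton]
    omega
  rw [hfil2, Finset.sum_pair (by norm_num), co_add, co_one, pow_zero, co_one, pow_one]

variable {r : ℕ}

noncomputable def sig (M : Matrix (Fin r) (Fin r) (PowerSeries ℂ)) :
    Matrix (Fin r) (Fin r) (PowerSeries ℂ) := (M.map (PowerSeries.rescale (-1)))ᵀ

lemma sig_apply (M : Matrix (Fin r) (Fin r) (PowerSeries ℂ)) (i j : Fin r) :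
    sig M i j = PowerSeries.rescale (-1) (M j i) := rfl

lemma sig_mul (M N : Matrix (Fin r) (Fin r) (PowerSeries ℂ)) :
    sig (M * N) = sig N * sig M := by
  unfold sig
  rw [Matrix.map_mul (f := PowerSeries.rescale (-1)), Matrix.transpose_mul]

lemma sig_one : sig (1 : Matrix (Fin r) (Fin r) (PowerSeries ℂ)) = 1 := by
  unfold sig
  rw [Matrix.map_one _ (map_zero _) (map_one _), Matrix.transpose_one]

lemma sig_sub (M N : Matrix (Fin r) (Fin r) (PowerSeries ℂ)) :
    sig (M - N) = sig M - sig N := by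
  ext i j
  simp [sig_apply, Matrix.sub_apply, map_sub]

lemma sig_pow (N : Matrix (Fin r) (Fin r) (PowerSeries ℂ)) (h : sig N = N) (k : ℕ) :
    sig (N ^ k) = N ^ k := by
  induction k with
  | zero => simpa using sig_one
  | succ k ih => rw [pow_succ, sig_mul, h, ih]; exact (pow_mul_comm' N k).symm
    
lemma rescale_neg_one_C (a : ℂ) :
    PowerSeries.rescale (-1) (PowerSeries.C (R := ℂ) a) = PowerSeries.C (R := ℂ) a := by
  ext n
  simp only [PowerSeries.coeff_rescale, PowerSeries.coeff_C]
  rcases eq_or_ne n 0 with h | h <;> simp [h]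

lemma sig_constmap (A : Matrix (Fin r) (Fin r) ℂ) :
    sig (A.map (PowerSeries.C (R := ℂ))) = Aᵀ.map (PowerSeries.C (R := ℂ)) := by
  unfold sig
  rw [Matrix.map_map]
  have : (PowerSeries.rescale (-1) : PowerSeries ℂ → PowerSeries ℂ) ∘ (PowerSeries.C (R := ℂ))
      = (PowerSeries.C (R := ℂ) : ℂ → PowerSeries ℂ) := by
    funext a; exact rescale_neg_one_C a
  rw [this, Matrix.transpose_map]

lemma sig_sqrtm {r : ℕ} {N : Matrix (Fin r) (Fin r) (PowerSeries ℂ)} (h : sig N = N) :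
    sig (sqrtm N) = sqrtm N := by
  refine Matrix.ext fun i j => ?_
  have h1 : sig (sqrtm N) i j = PowerSeries.rescale (-1) (sqrtm N j i) := rfl
  have hjieq : sqrtm N j i = PowerSeries.mk fun n =>
      ∑ k ∈ Finset.range (n + 1), sqcoef k * PowerSeries.coeff (R := ℂ) n ((N ^ k) j i) := rfl
  have hijeq : sqrtm N i j = PowerSeries.mk fun n =>
      ∑ k ∈ Finset.range (n + 1), sqcoef k * PowerSeries.coeff (R := ℂ) n ((N ^ k) i j) := rfl
  rw [h1, hjieq, hijeq, PowerSeries.rescale_mk]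
  apply PowerSeries.ext
  intro n
  rw [PowerSeries.coeff_mk, PowerSeries.coeff_mk, Finset.mul_sum]
  refine Finset.sum_congr rfl fun k _ => ?_
  have hk := congrFun (congrFun (sig_pow N h k) i) j
  rw [sig_apply] at hk
  have hc : (-1 : ℂ) ^ n * PowerSeries.coeff (R := ℂ) n ((N ^ k) j i)
      = PowerSeries.coeff (R := ℂ) n ((N ^ k) i j) := by
    rw [← hk, PowerSeries.coeff_rescale]
  rw [← hc]; ring

/-- Let `B ∈ M_r(ℂ[[t]])` with `det B = 1` and `ρ(B)ᵀ = B` (i.e. `B(t)ᵀ = B(-t)`),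
where `ρ` is the `ℂ`-algebra endomorphism of `ℂ[[t]]` sending `t` to `-t`
(rescaling by `-1`), applied entrywise. Then there exists `C ∈ M_r(ℂ[[t]])` with
`det C = 1` such that `B = ρ(C)ᵀ·C`, i.e. `B(t) = C(-t)ᵀ·C(t)`. -/
theorem symmetric_powerSeries_matrix_factorization (r : ℕ) (hr : 1 ≤ r)
    (B : Matrix (Fin r) (Fin r) (PowerSeries ℂ))
    (hdet : B.det = 1)
    (hsym : (B.map (PowerSeries.rescale (-1)))ᵀ = B) :
    ∃ C : Matrix (Fin r) (Fin r) (PowerSeries ℂ),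
      C.det = 1 ∧ B = (C.map (PowerSeries.rescale (-1)))ᵀ * C := by
  classical
  have hsig : sig B = B := hsym
  -- constant coefficient matrix
  have co_rescale : ∀ (n : ℕ) (M : Matrix (Fin r) (Fin r) (PowerSeries ℂ)),
      co n (sig M) = ((-1 : ℂ) ^ n) • (co n M)ᵀ := by
    intro n M
    ext i j
    simp [co, sig_apply, PowerSeries.coeff_rescale]
  have hB0sym : (co 0 B)ᵀ = co 0 B := by
    have h := congrArg (co 0) hsig
    rw [co_rescale] at h
    simpa using h
  have hB0det : (co 0 B).det = 1 := by
    have h := RingHom.map_det (PowerSeries.constantCoeff (R := ℂ)) B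
    rw [hdet, _root_.map_one] at h
    have hco : (PowerSeries.constantCoeff (R := ℂ)).mapMatrix B = co 0 B := by
      ext i j
      simp [co, RingHom.mapMatrix_apply, PowerSeries.coeff_zero_eq_constantCoeff]
    rw [hco] at h
    exact h.symm
  obtain ⟨A, hA, hAdet⟩ := sym_factor (co 0 B) hB0sym (by rw [hB0det]; exact one_ne_zero)
  have hAA' : A * A⁻¹ = 1 := Matrix.mul_nonsing_inv A hAdet
  have hA'A : A⁻¹ * A = 1 := Matrix.nonsing_inv_mul A hAdet
  -- conjugated matrix with constant coefficient 1
  set CC : ℂ →+* PowerSeries ℂ := PowerSeries.C (R := ℂ) with hCC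
  set B' : Matrix (Fin r) (Fin r) (PowerSeries ℂ) :=
    ((A⁻¹)ᵀ.map CC) * B * ((A⁻¹).map CC) with hB'
  have co_cmap0 : ∀ X : Matrix (Fin r) (Fin r) ℂ, co 0 (X.map CC) = X := by
    intro X
    ext i j
    simp [co, hCC, PowerSeries.coeff_zero_C]
  have co_zero_mul : ∀ M N : Matrix (Fin r) (Fin r) (PowerSeries ℂ),
      co 0 (M * N) = co 0 M * co 0 N := by
    intro M N
    rw [co_mul, Finset.Nat.antidiagonal_zero, Finset.sum_singleton]
  have hco0B' : co 0 B' = 1 := by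
    rw [hB', co_zero_mul, co_zero_mul, co_cmap0, co_cmap0, ← hA]
    calc (A⁻¹)ᵀ * (Aᵀ * A) * A⁻¹ = ((A⁻¹)ᵀ * Aᵀ) * (A * A⁻¹) := by
          rw [Matrix.mul_assoc, Matrix.mul_assoc, Matrix.mul_assoc]
      _ = (A * A⁻¹)ᵀ * (A * A⁻¹) := by rw [Matrix.transpose_mul]
      _ = 1 := by rw [hAA', Matrix.transpose_one, Matrix.one_mul]
  have hsigB' : sig B' = B' := by
    rw [hB', sig_mul, sig_mul, hsig, sig_constmap, sig_constmap, Matrix.transpose_transpose]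
    rw [Matrix.mul_assoc]
  set N : Matrix (Fin r) (Fin r) (PowerSeries ℂ) := B' - 1 with hN
  have h0 : co 0 N = 0 := by
    rw [hN, co_sub, hco0B', co_one]
    simp
  have hsigN : sig N = N := by
    rw [hN, sig_sub, sig_one, hsigB']
  set c := sqrtm N with hc
  have hcc : c * c = B' := by
    rw [hc, sqrtm_mul_self h0, hN]
    abel
  have hsigc : sig c = c := sig_sqrtm hsigN
  set C0 : Matrix (Fin r) (Fin r) (PowerSeries ℂ) := c * (A.map CC) with hC0
  have hfact : sig C0 * C0 = B := by
    rw [hC0, sig_mul, hsigc, sig_constmap]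
    calc (Aᵀ.map CC) * c * (c * A.map CC)
        = (Aᵀ.map CC) * (c * c) * (A.map CC) := by
          rw [Matrix.mul_assoc, Matrix.mul_assoc, Matrix.mul_assoc]
      _ = (Aᵀ.map CC) * B' * (A.map CC) := by rw [hcc]
      _ = ((Aᵀ * (A⁻¹)ᵀ).map CC) * B * ((A⁻¹ * A).map CC) := by
          rw [hB', Matrix.map_mul (f := CC), Matrix.map_mul (f := CC)]
          simp only [Matrix.mul_assoc]
      _ = B := by
          rw [← Matrix.transpose_mul, hA'A, Matrix.transpose_one,
            Matrix.map_one (⇑CC) (map_zero CC) (_root_.map_one CC),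
            Matrix.one_mul, Matrix.mul_one]
  -- determinant correction
  set d : PowerSeries ℂ := C0.det with hd
  have hdd : PowerSeries.rescale (-1) d * d = 1 := by
    have h := congrArg Matrix.det hfact
    rw [Matrix.det_mul, hdet] at h
    have hsigdet : (sig C0).det = PowerSeries.rescale (-1) d := by
      unfold sig
      rw [Matrix.det_transpose]
      rw [hd, RingHom.map_det (PowerSeries.rescale (-1)) C0, RingHom.mapMatrix_apply]
    rw [hsigdet] at h
    exact h
  set i0 : Fin r := ⟨0, hr⟩ with hi0
  set u : PowerSeries ℂ := PowerSeries.rescale (-1) d with hu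
  set D : Matrix (Fin r) (Fin r) (PowerSeries ℂ) :=
    Matrix.diagonal (fun i => if i = i0 then u else 1) with hD
  have hrescu : PowerSeries.rescale (-1) u = d := by
    rw [hu, PowerSeries.rescale_rescale]
    norm_num [PowerSeries.rescale_one]
  have hsigD : sig D = Matrix.diagonal (fun i => if i = i0 then d else 1) := by
    have hfun : (fun m => PowerSeries.rescale (-1) (if m = i0 then u else 1))
        = (fun i => if i = i0 then d else 1) := by
      funext m
      rw [apply_ite (PowerSeries.rescale (-1)), hrescu, _root_.map_one]
    unfold sig
    rw [hD, Matrix.diagonal_map (map_zero _), Matrix.diagonal_transpose, hfun]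
  have hsigDD : sig D * D = 1 := by
    rw [hsigD, hD, Matrix.diagonal_mul_diagonal]
    have : (fun i => (if i = i0 then d else 1) * (if i = i0 then u else 1)) = fun _ => (1 : PowerSeries ℂ) := by
      funext i
      by_cases h : i = i0
      · simp only [h, if_pos rfl]
        rw [mul_comm]
        exact hdd
      · simp [h]
    rw [this, Matrix.diagonal_one]
  refine ⟨D * C0, ?_, ?_⟩
  · rw [Matrix.det_mul, hD, Matrix.det_diagonal]
    rw [Finset.prod_ite_eq' Finset.univ i0 (fun _ => u)]
    rw [if_pos (Finset.mem_univ i0), ← hd]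
    exact hdd
  · symm
    have h1 : ((D * C0).map (PowerSeries.rescale (-1)))ᵀ = sig (D * C0) := rfl
    rw [h1, sig_mul]
    calc sig C0 * sig D * (D * C0)
        = sig C0 * (sig D * D) * C0 := by
          simp only [Matrix.mul_assoc]
      _ = B := by rw [hsigDD, Matrix.mul_one, hfact]
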